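/- Let 𝔉 = 𝔉(X) be the free profinite group on a finite set X with |X| > 1. If C ⊆ 𝔉 is an abelian closed normal subgroup, then C = {e}. -/

import Mathlib

set_option linter.unusedVariables false

namespace CSP

/-! ### The profinite completion of a discrete group -/

/-- The index set for the profinite completion: finite-index normal subgroups. -/
abbrev FinQuot (G : Type*) [Group G] : Type _ :=
  {N : Subgroup G // N.Normal ∧ N.FiniteIndex}

variable (G : Type*) [Group G]

instance (N : FinQuot G) : (N.1).Normal := N.2.1

instance (N : FinQuot G) : TopologicalSpace (G ⧸ N.1) := ⊥

instance (N : FinQuot G) : DiscreteTopology (G ⧸ N.1) := ⟨rfl⟩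

instance (N : FinQuot G) : IsTopologicalGroup (G ⧸ N.1) where
  continuous_mul := continuous_of_discreteTopology
  continuous_inv := continuous_of_discreteTopology

/-- The diagonal homomorphism from `G` into the product of all of its finite quotients. -/
def toFinQuots : G →* (∀ N : FinQuot G, G ⧸ N.1) :=
  Pi.monoidHom fun N => QuotientGroup.mk' N.1

/-- The profinite completion of `G` as a subgroup of the product of the finite
quotients of `G`: the closure of the image of the diagonal map. -/
def profSubgroup : Subgroup (∀ N : FinQuot G, G ⧸ N.1) :=
  (toFinQuots G).range.topologicalClosure

/-- The profinite completion of a (discrete) group `G`, as a topological group.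
For `G = F(X)` a free group on a finite set `X`, this is the free profinite group
`𝔉(X)` on `X`. -/
abbrev ProfComp : Type _ := ↥(profSubgroup G)

/-- The canonical homomorphism from `G` to its profinite completion.  For a free
group this is the embedding of `F(X)` into the free profinite group `𝔉(X)`. -/
def unit : G →* ProfComp G :=
  (toFinQuots G).codRestrict _ fun g =>
    Subgroup.le_topologicalClosure _ (MonoidHom.mem_range.2 ⟨g, rfl⟩)



section Wreath

variable {P K : Type*} [Group P] [Group K]

/-- Translation automorphisms of the group of functions `P → K`. -/
def shiftAut (P K : Type*) [Group P] [Group K] : P →* MulAut (P → K) where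
  toFun p :=
    { toFun := fun f z => f (p⁻¹ * z)
      invFun := fun f z => f (p * z)
      left_inv := fun f => by funext z; simp [mul_assoc]
      right_inv := fun f => by funext z; simp [← mul_assoc]
      map_mul' := fun f g => rfl }
  map_one' := by ext f z; simp
  map_mul' p q := by ext f z; simp [mul_assoc]

@[simp] lemma shiftAut_apply (p : P) (f : P → K) (z : P) :
    shiftAut P K p f z = f (p⁻¹ * z) := rfl

/-- The wreath-type semidirect product. -/
abbrev Wr (P K : Type*) [Group P] [Group K] : Type _ := (P → K) ⋊[shiftAut P K] P

lemma Wr_pow_right (w : Wr P K) (n : ℕ) : (w ^ n).right = w.right ^ n := by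
  induction n with
  | zero => simp
  | succ n ih => rw [pow_succ, pow_succ, SemidirectProduct.mul_right, ih]

lemma pi_list_prod_apply (z : P) (l : List (P → K)) : l.prod z = (l.map fun f => f z).prod := by
  induction l with
  | nil => rfl
  | cons f l ih => simp [List.prod_cons, ih]

lemma Wr_pow_left (w : Wr P K) (n : ℕ) :
    (w ^ n).left = ((List.range n).map fun j => shiftAut P K (w.right ^ j) w.left).prod := by
  induction n with
  | zero => simp
  | succ n ih =>
      rw [pow_succ, SemidirectProduct.mul_left, ih, List.range_succ, List.map_append,
        List.prod_append, Wr_pow_right]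
      simp

variable [DecidableEq P]

/-- Delta function at the identity. -/
def delta (k : K) : P → K := fun z => if z = 1 then k else 1

lemma Wr_pow_delta_left_eval (p : P) (k : K) (n : ℕ) (z : P) :
    ((⟨delta k, p⟩ : Wr P K) ^ n).left z
      = ((List.range n).map fun j => if z = p ^ j then k else 1).prod := by
  rw [Wr_pow_left, pi_list_prod_apply, List.map_map]
  congr 1
  refine List.map_congr_left fun j _ => ?_
  simp only [Function.comp, shiftAut_apply, delta]
  congr 1
  simp [inv_mul_eq_one, eq_comm]

lemma eval_one_aux (p : P) (k : K) (n : ℕ) (h1 : 1 ≤ n) (h2 : n ≤ orderOf p) :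
    ((List.range n).map fun j => if (1:P) = p ^ j then k else 1).prod = k := by
  induction n with
  | zero => omega
  | succ m ih =>
      rw [List.range_succ, List.map_append, List.prod_append]
      rcases Nat.eq_or_lt_of_le h1 with h | h
      · obtain rfl : m = 0 := by omega
        simp
      · have hm1 : 1 ≤ m := by omega
        rw [ih hm1 (by omega), List.map_singleton, List.prod_singleton, if_neg, mul_one]
        intro hh
        have := orderOf_le_of_pow_eq_one (by omega : 0 < m) hh.symm
        omega

lemma eval_one (p : P) (k : K) (hp : 0 < orderOf p) :
    ((⟨delta k, p⟩ : Wr P K) ^ orderOf p).left 1 = k := by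
  rw [Wr_pow_delta_left_eval]
  exact eval_one_aux p k _ hp le_rfl

lemma eval_notmem (p : P) (k : K) (n : ℕ) {z : P} (hz : z⁻¹ ∉ Subgroup.zpowers p) :
    ((⟨delta k, p⟩ : Wr P K) ^ n).left z = 1 := by
  rw [Wr_pow_delta_left_eval]
  refine List.prod_eq_one fun x hx => ?_
  obtain ⟨j, _, rfl⟩ := List.mem_map.1 hx
  refine if_neg fun h => hz ?_
  rw [h]
  exact ⟨-(j : ℤ), by simp⟩

/-- The core identity extracted from commutation of `h` with its conjugate by a
base element `⟨S, 1⟩`. -/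
lemma dagger (f S : P → K) (cc : P)
    (hcomm : (⟨f, cc⟩ : Wr P K) * (⟨S, 1⟩ * ⟨f, cc⟩ * (⟨S, 1⟩ : Wr P K)⁻¹)
      = (⟨S, 1⟩ * ⟨f, cc⟩ * (⟨S, 1⟩ : Wr P K)⁻¹) * ⟨f, cc⟩) :
    f 1 * (S cc⁻¹ * (f cc⁻¹ * (S (cc⁻¹ * cc⁻¹))⁻¹))
      = S 1 * (f 1 * ((S cc⁻¹)⁻¹ * f cc⁻¹)) := by
  have h1 := congrArg SemidirectProduct.left hcomm
  have h2 := congrFun h1 1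
  simp only [SemidirectProduct.mul_left, SemidirectProduct.inv_left, SemidirectProduct.mul_right,
    Pi.mul_apply, Pi.inv_apply, shiftAut_apply, map_one, one_mul, mul_one, inv_one,
    MulAut.one_apply] at h2
  simpa [mul_assoc] using h2

lemma keyE1 (f S : P → K) (cc : P)
    (hcomm : (⟨f, cc⟩ : Wr P K) * (⟨S, 1⟩ * ⟨f, cc⟩ * (⟨S, 1⟩ : Wr P K)⁻¹)
      = (⟨S, 1⟩ * ⟨f, cc⟩ * (⟨S, 1⟩ : Wr P K)⁻¹) * ⟨f, cc⟩)
    (h1 : S cc⁻¹ = 1) (h2 : S (cc⁻¹ * cc⁻¹) = 1) : S 1 = 1 := by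
  have hd := dagger f S cc hcomm
  rw [h1, h2] at hd
  simp only [one_mul, inv_one, mul_one] at hd
  exact right_eq_mul.1 hd

lemma keyE2 (f S : P → K) (cc : P)
    (hcomm : (⟨f, cc⟩ : Wr P K) * (⟨S, 1⟩ * ⟨f, cc⟩ * (⟨S, 1⟩ : Wr P K)⁻¹)
      = (⟨S, 1⟩ * ⟨f, cc⟩ * (⟨S, 1⟩ : Wr P K)⁻¹) * ⟨f, cc⟩)
    (h1 : S cc⁻¹ = 1) (hc2 : cc ^ 2 = 1) :
    (f 1 * f cc⁻¹) * (S 1)⁻¹ = S 1 * (f 1 * f cc⁻¹) := by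
  have hcc : cc⁻¹ * cc⁻¹ = 1 := by
    rw [← mul_inv_rev, ← sq, hc2, inv_one]
  have hd := dagger f S cc hcomm
  rw [h1, hcc] at hd
  simp only [one_mul, inv_one, mul_one] at hd
  rw [← mul_assoc] at hd
  exact hd

lemma inversion {u a b : K}
    (ha : u * a⁻¹ = a * u) (hb : u * b⁻¹ = b * u) (hab : u * (a * b)⁻¹ = (a * b) * u) :
    a * b = b * a := by
  have h1 : (a * b) * u = u * (b⁻¹ * a⁻¹) := by rw [← mul_inv_rev, ← hab]
  have h2 : (a * b) * u = u * (a⁻¹ * b⁻¹) := by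
    calc (a * b) * u = a * (b * u) := by rw [mul_assoc]
    _ = a * (u * b⁻¹) := by rw [hb]
    _ = (a * u) * b⁻¹ := by rw [mul_assoc]
    _ = (u * a⁻¹) * b⁻¹ := by rw [ha]
    _ = u * (a⁻¹ * b⁻¹) := by rw [mul_assoc]
  have h3 : b⁻¹ * a⁻¹ = a⁻¹ * b⁻¹ := mul_left_cancel (h1.symm.trans h2)
  have := congrArg (fun z => z⁻¹) h3
  simpa [mul_inv_rev] using this

end Wreath

section CaseAnalysis

open Multiplicative

/-- The combinatorial case analysis in `Q₀ × C_{2e} × C_{2e}`. -/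
lemma case_analysis {Q₀ : Type*} [Group Q₀] {e : ℕ} (he : e ≠ 0)
    (hexp : ∀ a : Q₀, a ^ e = 1) (q₀ r₀ : Q₀)
    (cP : Q₀ × Multiplicative (ZMod (2 * e)) × Multiplicative (ZMod (2 * e)))
    (hc1 : cP.1 ≠ 1) :
    (cP ∉ Subgroup.zpowers (q₀, ofAdd (1 : ZMod (2 * e)), 1)
       ∧ cP ^ 2 ∉ Subgroup.zpowers (q₀, ofAdd (1 : ZMod (2 * e)), 1))
    ∨ (cP ∉ Subgroup.zpowers (r₀, 1, ofAdd (1 : ZMod (2 * e)))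
       ∧ cP ^ 2 ∉ Subgroup.zpowers (r₀, 1, ofAdd (1 : ZMod (2 * e))))
    ∨ (cP ^ 2 = 1 ∧ cP ∉ Subgroup.zpowers (q₀, ofAdd (1 : ZMod (2 * e)), 1)
       ∧ cP ∉ Subgroup.zpowers (r₀, 1, ofAdd (1 : ZMod (2 * e)))) := by
  haveI : NeZero (2 * e) := ⟨by omega⟩
  obtain ⟨c₀, d₁, d₂⟩ := cP
  have hc0 : c₀ ≠ 1 := hc1
  -- the key divisibility fact
  have key : ∀ (j : ℤ) (a : Q₀),
      ((j : ZMod (2 * e)) + (j : ZMod (2 * e)) = 0) → a ^ j = 1 := by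
    intro j a hj
    have h2j : ((2 * j : ℤ) : ZMod (2 * e)) = 0 := by
      have : ((2 * j : ℤ) : ZMod (2 * e)) = (j : ZMod (2 * e)) + (j : ZMod (2 * e)) := by
        push_cast; ring
      rw [this]; exact hj
    have hdvd : ((2 * e : ℕ) : ℤ) ∣ 2 * j := (ZMod.intCast_zmod_eq_zero_iff_dvd _ _).1 h2j
    have hdvd2 : (2 : ℤ) * (e : ℤ) ∣ 2 * j := by push_cast at hdvd; exact hdvd
    have hdvd' : (e : ℤ) ∣ j := (mul_dvd_mul_iff_left (by norm_num : (2:ℤ) ≠ 0)).1 hdvd2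
    obtain ⟨k, rfl⟩ := hdvd'
    rw [zpow_mul, zpow_natCast, hexp, one_zpow]
  -- zpow of ofAdd 1
  have hofadd : ∀ j : ℤ, (ofAdd (1 : ZMod (2 * e))) ^ j = ofAdd ((j : ZMod (2 * e))) := by
    intro j
    rw [← ofAdd_zsmul]
    congr 1
    rw [zsmul_eq_mul, mul_one]
  -- membership characterizations
  have memq : ∀ w₀ dd₁ dd₂, ((w₀, dd₁, dd₂) : Q₀ × Multiplicative (ZMod (2*e)) × Multiplicative (ZMod (2*e)))
      ∈ Subgroup.zpowers (q₀, ofAdd (1 : ZMod (2 * e)), 1)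
      → ∃ j : ℤ, q₀ ^ j = w₀ ∧ ofAdd ((j : ZMod (2 * e))) = dd₁ ∧ (1 : Multiplicative (ZMod (2*e))) = dd₂ := by
    rintro w₀ dd₁ dd₂ ⟨j, hj⟩
    rw [Prod.ext_iff, Prod.ext_iff] at hj
    exact ⟨j, hj.1, by rw [← hofadd]; exact hj.2.1, by rw [← one_zpow j]; exact hj.2.2⟩
  have memr : ∀ w₀ dd₁ dd₂, ((w₀, dd₁, dd₂) : Q₀ × Multiplicative (ZMod (2*e)) × Multiplicative (ZMod (2*e)))
      ∈ Subgroup.zpowers (r₀, 1, ofAdd (1 : ZMod (2 * e)))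
      → ∃ j : ℤ, r₀ ^ j = w₀ ∧ (1 : Multiplicative (ZMod (2*e))) = dd₁ ∧ ofAdd ((j : ZMod (2 * e))) = dd₂ := by
    rintro w₀ dd₁ dd₂ ⟨j, hj⟩
    rw [Prod.ext_iff, Prod.ext_iff] at hj
    exact ⟨j, hj.1, by rw [← one_zpow j]; exact hj.2.1, by rw [← hofadd]; exact hj.2.2⟩
  have hsq : ((c₀, d₁, d₂) : Q₀ × Multiplicative (ZMod (2*e)) × Multiplicative (ZMod (2*e))) ^ 2
      = (c₀ ^ 2, d₁ ^ 2, d₂ ^ 2) := rfl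
  by_cases h2 : d₂ * d₂ = 1
  · by_cases h1 : d₁ * d₁ = 1
    · -- both torsion; in this case cP avoids both cyclic subgroups
      have hnq : ((c₀, d₁, d₂) : Q₀ × _ × _) ∉ Subgroup.zpowers (q₀, ofAdd (1 : ZMod (2*e)), 1) := by
        intro hmem
        obtain ⟨j, hjq, hjd, _⟩ := memq _ _ _ hmem
        have : (j : ZMod (2*e)) + (j : ZMod (2*e)) = 0 := by
          have := h1
          rw [← hjd, ← ofAdd_add] at this
          exact ofAdd_eq_one.1 this
        exact hc0 (by rw [← hjq, key j q₀ this])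
      have hnr : ((c₀, d₁, d₂) : Q₀ × _ × _) ∉ Subgroup.zpowers (r₀, 1, ofAdd (1 : ZMod (2*e))) := by
        intro hmem
        obtain ⟨j, hjr, _, hjd⟩ := memr _ _ _ hmem
        have : (j : ZMod (2*e)) + (j : ZMod (2*e)) = 0 := by
          have := h2
          rw [← hjd, ← ofAdd_add] at this
          exact ofAdd_eq_one.1 this
        exact hc0 (by rw [← hjr, key j r₀ this])
      by_cases hc2 : c₀ * c₀ = 1
      · refine Or.inr (Or.inr ⟨?_, hnq, hnr⟩)
        rw [hsq, sq, sq, sq, hc2, h1, h2]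
        rfl
      · refine Or.inl ⟨hnq, ?_⟩
        rw [hsq]
        intro hmem
        obtain ⟨j, hjq, hjd, _⟩ := memq _ _ _ hmem
        have hj0 : (j : ZMod (2*e)) + (j : ZMod (2*e)) = 0 := by
          have hd : ofAdd ((j : ZMod (2*e))) = 1 := by rw [hjd, sq, h1]
          have : (j : ZMod (2*e)) = 0 := ofAdd_eq_one.1 hd
          rw [this, add_zero]
        have hq1 : q₀ ^ j = 1 := key j q₀ hj0
        rw [hq1] at hjq
        have : c₀ * c₀ = 1 := by rw [← sq]; exact hjq.symm
        exact hc2 this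
    · -- d₁ not 2-torsion: escape via r
      refine Or.inr (Or.inl ⟨?_, ?_⟩)
      · intro hmem
        obtain ⟨j, _, hjd, _⟩ := memr _ _ _ hmem
        exact h1 (by rw [← hjd, one_mul])
      · rw [hsq]
        intro hmem
        obtain ⟨j, _, hjd, _⟩ := memr _ _ _ hmem
        exact h1 (by rw [← sq]; exact hjd.symm)
  · -- d₂ not 2-torsion: escape via q
    refine Or.inl ⟨?_, ?_⟩
    · intro hmem
      obtain ⟨j, _, _, hjd⟩ := memq _ _ _ hmem
      exact h2 (by rw [← hjd, one_mul])
    · rw [hsq]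
      intro hmem
      obtain ⟨j, _, _, hjd⟩ := memq _ _ _ hmem
      exact h2 (by rw [← sq]; exact hjd.symm)

end CaseAnalysis

section Engine

variable {P K : Type*} [Group P] [Group K] [Finite P] [DecidableEq P]
variable {Γ : Type*} [Group Γ]

lemma engine (Φ : Γ →* Wr P K) (uq ur cγ : Γ) {σ τ : K} {qP rP : P}
    (hΦq : Φ uq = ⟨delta σ, qP⟩) (hΦr : Φ ur = ⟨delta τ, rP⟩)
    (hcomm : ∀ g : Γ, Φ cγ * (Φ g * Φ cγ * (Φ g)⁻¹) = Φ g * Φ cγ * (Φ g)⁻¹ * Φ cγ)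
    (hσ : σ ≠ 1) (hτ : τ ≠ 1) (hστ : σ * τ ≠ τ * σ)
    (hdisj : ((Φ cγ).right ∉ Subgroup.zpowers qP ∧ ((Φ cγ).right) ^ 2 ∉ Subgroup.zpowers qP)
      ∨ (((Φ cγ).right ∉ Subgroup.zpowers rP ∧ ((Φ cγ).right) ^ 2 ∉ Subgroup.zpowers rP))
      ∨ (((Φ cγ).right) ^ 2 = 1 ∧ (Φ cγ).right ∉ Subgroup.zpowers qP
          ∧ (Φ cγ).right ∉ Subgroup.zpowers rP)) :
    False := by
  set cc := (Φ cγ).right with hccdef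
  set ff := (Φ cγ).left with hffdef
  have heta : Φ cγ = (⟨ff, cc⟩ : Wr P K) := rfl
  set n1 := orderOf qP with hn1
  set n2 := orderOf rP with hn2
  set B1 : Wr P K := (⟨delta σ, qP⟩ : Wr P K) ^ n1 with hB1
  set B2 : Wr P K := (⟨delta τ, rP⟩ : Wr P K) ^ n2 with hB2
  have hB1r : B1.right = 1 := by rw [hB1, Wr_pow_right]; exact pow_orderOf_eq_one qP
  have hB2r : B2.right = 1 := by rw [hB2, Wr_pow_right]; exact pow_orderOf_eq_one rP
  set S1 := B1.left with hS1
  set S2 := B2.left with hS2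
  have hB1eq : B1 = (⟨S1, 1⟩ : Wr P K) := SemidirectProduct.ext rfl hB1r
  have hB2eq : B2 = (⟨S2, 1⟩ : Wr P K) := SemidirectProduct.ext rfl hB2r
  have hS1one : S1 1 = σ := by rw [hS1, hB1, hn1]; exact eval_one qP σ (orderOf_pos qP)
  have hS2one : S2 1 = τ := by rw [hS2, hB2, hn2]; exact eval_one rP τ (orderOf_pos rP)
  have hΦuq : Φ (uq ^ n1) = B1 := by rw [map_pow, hΦq, hB1]
  have hΦur : Φ (ur ^ n2) = B2 := by rw [map_pow, hΦr, hB2]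
  have hcomm1 : (⟨ff, cc⟩ : Wr P K) * (⟨S1, 1⟩ * ⟨ff, cc⟩ * (⟨S1, 1⟩ : Wr P K)⁻¹)
      = (⟨S1, 1⟩ * ⟨ff, cc⟩ * (⟨S1, 1⟩ : Wr P K)⁻¹) * ⟨ff, cc⟩ := by
    have h := hcomm (uq ^ n1)
    rw [hΦuq, hB1eq, heta] at h
    exact h
  have hcomm2 : (⟨ff, cc⟩ : Wr P K) * (⟨S2, 1⟩ * ⟨ff, cc⟩ * (⟨S2, 1⟩ : Wr P K)⁻¹)
      = (⟨S2, 1⟩ * ⟨ff, cc⟩ * (⟨S2, 1⟩ : Wr P K)⁻¹) * ⟨ff, cc⟩ := by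
    have h := hcomm (ur ^ n2)
    rw [hΦur, hB2eq, heta] at h
    exact h
  have hB3 : Φ (uq ^ n1 * ur ^ n2) = (⟨S1 * S2, 1⟩ : Wr P K) := by
    rw [map_mul, hΦuq, hΦur, hB1eq, hB2eq]
    refine SemidirectProduct.ext ?_ ?_
    · show S1 * (shiftAut P K 1) S2 = S1 * S2
      rw [map_one]
      rfl
    · show (1 : P) * 1 = 1
      rw [one_mul]
  have hcomm3 : (⟨ff, cc⟩ : Wr P K) * (⟨S1 * S2, 1⟩ * ⟨ff, cc⟩ * (⟨S1 * S2, 1⟩ : Wr P K)⁻¹)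
      = (⟨S1 * S2, 1⟩ * ⟨ff, cc⟩ * (⟨S1 * S2, 1⟩ : Wr P K)⁻¹) * ⟨ff, cc⟩ := by
    have h := hcomm (uq ^ n1 * ur ^ n2)
    rw [hB3, heta] at h
    exact h
  -- evaluation helpers
  have hS1ev : ∀ z : P, z⁻¹ ∉ Subgroup.zpowers qP → S1 z = 1 := by
    intro z hz
    rw [hS1, hB1]
    exact eval_notmem qP σ n1 hz
  have hS2ev : ∀ z : P, z⁻¹ ∉ Subgroup.zpowers rP → S2 z = 1 := by
    intro z hz
    rw [hS2, hB2]
    exact eval_notmem rP τ n2 hz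
  have hinvinv : (cc⁻¹)⁻¹ = cc := inv_inv cc
  have hsqinv : (cc⁻¹ * cc⁻¹)⁻¹ = cc ^ 2 := by
    rw [mul_inv_rev, inv_inv, ← sq]
  rcases hdisj with ⟨h1, h2⟩ | ⟨h1, h2⟩ | ⟨hsq2, h1, h2⟩
  · apply hσ
    rw [← hS1one]
    refine keyE1 ff S1 cc hcomm1 (hS1ev _ (by rw [hinvinv]; exact h1))
      (hS1ev _ (by rw [hsqinv]; exact h2))
  · apply hτ
    rw [← hS2one]
    refine keyE1 ff S2 cc hcomm2 (hS2ev _ (by rw [hinvinv]; exact h1))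
      (hS2ev _ (by rw [hsqinv]; exact h2))
  · have hc1 : S1 cc⁻¹ = 1 := hS1ev _ (by rw [hinvinv]; exact h1)
    have hc2 : S2 cc⁻¹ = 1 := hS2ev _ (by rw [hinvinv]; exact h2)
    have r1 := keyE2 ff S1 cc hcomm1 hc1 hsq2
    have r2 := keyE2 ff S2 cc hcomm2 hc2 hsq2
    have r3 := keyE2 ff (S1 * S2) cc hcomm3 (by rw [Pi.mul_apply, hc1, hc2, one_mul]) hsq2
    rw [hS1one] at r1
    rw [hS2one] at r2
    rw [Pi.mul_apply, hS1one, hS2one] at r3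
    exact hστ (inversion r1 r2 r3)

end Engine

section Main

open Multiplicative

variable {X : Type}

/-- Abbreviations for the finite groups used in the construction. -/
abbrev QD (X : Type) (N₀ : FinQuot (FreeGroup X)) : Type := FreeGroup X ⧸ N₀.1

abbrev MD (X : Type) (N₀ : FinQuot (FreeGroup X)) : Type :=
  Multiplicative (ZMod (2 * Monoid.exponent (QD X N₀)))

abbrev PD (X : Type) (N₀ : FinQuot (FreeGroup X)) : Type := QD X N₀ × MD X N₀ × MD X N₀

abbrev KD : Type := Equiv.Perm (Fin 3)

/-- The images of the free generators in the wreath-type group. -/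
noncomputable def genW (X : Type) [DecidableEq X] (N₀ : FinQuot (FreeGroup X))
    [DecidableEq (PD X N₀)] (x y : X) : X → Wr (PD X N₀) KD := fun z =>
  ⟨if z = x then delta (Equiv.swap 0 1) else if z = y then delta (Equiv.swap 1 2) else 1,
   (QuotientGroup.mk' N₀.1 (FreeGroup.of z),
    if z = x then ofAdd (1 : ZMod (2 * Monoid.exponent (QD X N₀))) else 1,
    if z = y then ofAdd (1 : ZMod (2 * Monoid.exponent (QD X N₀))) else 1)⟩

lemma main_aux (x y : X) (hxy : x ≠ y)
    (C : Subgroup (ProfComp (FreeGroup X))) (hCn : C.Normal)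
    (hCab : ∀ a ∈ C, ∀ b ∈ C, a * b = b * a)
    (c : ProfComp (FreeGroup X)) (hc : c ∈ C)
    (N₀ : FinQuot (FreeGroup X)) (hN₀ : c.1 N₀ ≠ 1) : False := by
  letI : DecidableEq X := Classical.decEq X
  letI : DecidableEq (PD X N₀) := Classical.decEq _
  haveI hFI : (N₀.1).FiniteIndex := N₀.2.2
  haveI : Finite (QD X N₀) := N₀.1.finite_quotient_of_finiteIndex
  have he : Monoid.exponent (QD X N₀) ≠ 0 := Monoid.exponent_ne_zero_of_finite
  haveI : NeZero (2 * Monoid.exponent (QD X N₀)) := ⟨by omega⟩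
  -- the homomorphism on the free group
  set ψ : FreeGroup X →* Wr (PD X N₀) KD := FreeGroup.lift (genW X N₀ x y) with hψdef
  -- its kernel is a finite-index normal subgroup
  haveI : Finite (Wr (PD X N₀) KD) :=
    Finite.of_injective (fun w : Wr (PD X N₀) KD => (w.left, w.right))
      (fun a b hab => SemidirectProduct.ext (congrArg Prod.fst hab) (congrArg Prod.snd hab))
  haveI : Finite (FreeGroup X ⧸ ψ.ker) :=
    Finite.of_equiv _ (QuotientGroup.quotientKerEquivRange ψ).symm.toEquiv
  obtain ⟨M', hM'le⟩ : ∃ M : FinQuot (FreeGroup X), M.1 ≤ ψ.ker :=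
    ⟨⟨ψ.ker, ψ.normal_ker, ⟨Subgroup.index_ne_zero_of_finite⟩⟩, le_rfl⟩
  -- the induced map on the profinite completion
  set Ψ : (FreeGroup X ⧸ M'.1) →* Wr (PD X N₀) KD := QuotientGroup.lift M'.1 ψ hM'le
    with hΨdef
  set Φ : ProfComp (FreeGroup X) →* Wr (PD X N₀) KD :=
    Ψ.comp ((Pi.evalMonoidHom (fun N : FinQuot (FreeGroup X) => FreeGroup X ⧸ N.1) M').comp
      (profSubgroup (FreeGroup X)).subtype) with hΦdef
  have hΦunit : ∀ g : FreeGroup X, Φ (unit (FreeGroup X) g) = ψ g := fun g => rfl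
  -- the Q₀-component of anything in the image of Φ is the N₀-coordinate
  have hright : ∀ g : FreeGroup X, ((ψ g).right).1 = QuotientGroup.mk' N₀.1 g := by
    intro g
    have hhom : (MonoidHom.fst (QD X N₀) (MD X N₀ × MD X N₀)).comp
        (SemidirectProduct.rightHom.comp ψ) = QuotientGroup.mk' N₀.1 := by
      refine FreeGroup.ext_hom _ _ fun a => ?_
      simp only [MonoidHom.comp_apply, hψdef, FreeGroup.lift_apply_of]
      rfl
    exact DFunLike.congr_fun hhom g
  have hcompat : ((Φ c).right).1 = c.1 N₀ := by
    have hmem : c.1 ∈ closure (((toFinQuots (FreeGroup X)).range : Subgroup _) : Set _) := c.2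
    have hsub : closure (((toFinQuots (FreeGroup X)).range : Subgroup _) : Set _) ⊆
        {v : ∀ N : FinQuot (FreeGroup X), FreeGroup X ⧸ N.1 | ((Ψ (v M')).right).1 = v N₀} := by
      refine closure_minimal ?_ ?_
      · rintro v ⟨g, rfl⟩
        show ((Ψ ((toFinQuots (FreeGroup X) g) M')).right).1 = (toFinQuots (FreeGroup X) g) N₀
        have h1 : Ψ ((toFinQuots (FreeGroup X) g) M') = ψ g := rfl
        rw [h1]
        exact hright g
      · have hcont : Continuous fun v : ∀ N : FinQuot (FreeGroup X), FreeGroup X ⧸ N.1 =>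
            ((Ψ (v M')).right).1 :=
          Continuous.comp (f := fun v : ∀ N : FinQuot (FreeGroup X), FreeGroup X ⧸ N.1 => v M')
            (g := fun a : FreeGroup X ⧸ M'.1 => ((Ψ a).right).1)
            continuous_of_discreteTopology (continuous_apply M')
        exact isClosed_eq hcont (continuous_apply N₀)
    exact hsub hmem
  -- commutation of the image of c with conjugates of itself
  have hcomm : ∀ g : ProfComp (FreeGroup X),
      Φ c * (Φ g * Φ c * (Φ g)⁻¹) = Φ g * Φ c * (Φ g)⁻¹ * Φ c := by
    intro g
    have h1 : g * c * g⁻¹ ∈ C := hCn.conj_mem c hc g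
    have h2 : c * (g * c * g⁻¹) = g * c * g⁻¹ * c := hCab c hc _ h1
    have := congrArg Φ h2
    simpa only [map_mul, map_inv] using this
  -- the two distinguished generators of the wreath product
  have hψx : ψ (FreeGroup.of x) = (⟨delta (Equiv.swap 0 1),
      (QuotientGroup.mk' N₀.1 (FreeGroup.of x),
        ofAdd (1 : ZMod (2 * Monoid.exponent (QD X N₀))), 1)⟩ : Wr (PD X N₀) KD) := by
    rw [hψdef, FreeGroup.lift_apply_of]
    simp [genW, hxy]
  have hψy : ψ (FreeGroup.of y) = (⟨delta (Equiv.swap 1 2),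
      (QuotientGroup.mk' N₀.1 (FreeGroup.of y), 1,
        ofAdd (1 : ZMod (2 * Monoid.exponent (QD X N₀))))⟩ : Wr (PD X N₀) KD) := by
    rw [hψdef, FreeGroup.lift_apply_of]
    simp [genW, hxy.symm]
  -- the case analysis
  have hc1 : ((Φ c).right).1 ≠ 1 := by rw [hcompat]; exact hN₀
  have hdisj := case_analysis he (fun a => Monoid.pow_exponent_eq_one a)
    (QuotientGroup.mk' N₀.1 (FreeGroup.of x)) (QuotientGroup.mk' N₀.1 (FreeGroup.of y))
    ((Φ c).right) hc1
  exact engine Φ (unit (FreeGroup X) (FreeGroup.of x)) (unit (FreeGroup X) (FreeGroup.of y)) c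
    (by rw [hΦunit]; exact hψx) (by rw [hΦunit]; exact hψy) hcomm
    (by decide) (by decide) (by decide) hdisj

end Main


/-- Corollary 2.4: in the free profinite group `𝔉(X)` on a finite set `X` with
`|X| > 1`, every abelian closed normal subgroup is trivial. -/
theorem abelian_closed_normal_trivial (X : Type) [Finite X] (hX : 1 < Nat.card X)
    (C : Subgroup (ProfComp (FreeGroup X))) (hCc : IsClosed (C : Set (ProfComp (FreeGroup X))))
    (hCn : C.Normal) (hCab : ∀ a ∈ C, ∀ b ∈ C, a * b = b * a) :
    C = ⊥ := by
  rw [Subgroup.eq_bot_iff_forall]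
  intro c hc
  by_contra hne
  obtain ⟨N₀, hN₀⟩ : ∃ N : FinQuot (FreeGroup X), c.1 N ≠ 1 := by
    by_contra hcon
    push_neg at hcon
    exact hne (Subtype.ext (funext hcon))
  obtain ⟨x, y, hxy⟩ := (Finite.one_lt_card_iff_nontrivial.mp hX).exists_pair_ne
  exact main_aux x y hxy C hCn hCab c hc N₀ hN₀

end CSP
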